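/- There exist constants c > 0 and λ₀ > 0 depending only on v such that for all λ ≥ λ₀, all t ∈ 𝓘 = [−1,2], and every n ≥ 0, the function θ_n satisfies (dθ_n/dx)(x) > c·2ⁿ at every point x ∈ ℝ/ℤ where θ_n is differentiable. -/

import Mathlib

open Real MeasureTheory Filter in
noncomputable def arccot (y : ℝ) : ℝ := Real.pi / 2 - Real.arctan y

/-- Euclidean (= ℓ²) operator norm of a 2×2 real matrix. -/
noncomputable def matNorm (M : Matrix (Fin 2) (Fin 2) ℝ) : ℝ :=
  ‖(Matrix.toEuclideanLin.trans LinearMap.toContinuousLinearMap) M‖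

/-- Cocycle iterates over the doubling map `x ↦ 2x`. -/
def cocycle (A : ℝ → Matrix (Fin 2) (Fin 2) ℝ) : ℕ → ℝ → Matrix (Fin 2) (Fin 2) ℝ
  | 0, _ => 1
  | n + 1, x => cocycle A n (2 * x) * A x

/-- Lyapunov exponent (as the infimum of the subadditive sequence). -/
noncomputable def lyap (A : ℝ → Matrix (Fin 2) (Fin 2) ℝ) : ℝ :=
  ⨅ n : ℕ, (1 / (n + 1 : ℝ)) * ∫ x in (0:ℝ)..1, Real.log (matNorm (cocycle A (n + 1) x))

/-- The angles θₙ. -/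
noncomputable def thetaN (v : ℝ → ℝ) (t lam : ℝ) : ℕ → ℝ → ℝ
  | 0, x => arccot (t - v x)
  | n + 1, x =>
      arccot (lam ^ 2 * ((t - v (2 ^ (n + 1) * x)) ^ 2 + 1) *
          Real.cot (thetaN v t lam n x))
        + arccot (t - v (2 ^ (n + 1) * x))

/-- The polar-form cocycle map. -/
noncomputable def polarA (v : ℝ → ℝ) (t lam : ℝ) (x : ℝ) : Matrix (Fin 2) (Fin 2) ℝ :=
  !![lam * Real.sqrt ((t - v (2 * x)) ^ 2 + 1), 0;
     0, lam⁻¹ / Real.sqrt ((t - v (2 * x)) ^ 2 + 1)] *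
  !![Real.cos (arccot (t - v x)), -Real.sin (arccot (t - v x));
     Real.sin (arccot (t - v x)), Real.cos (arccot (t - v x))]

/-- Distance to the nearest point of πℤ. -/
noncomputable def distRP1 (s : ℝ) : ℝ := |s - round (s / Real.pi) * Real.pi|

lemma arccot_pos (y : ℝ) : 0 < arccot y := by
  have := Real.arctan_lt_pi_div_two y
  unfold arccot; linarith

lemma arccot_lt_pi (y : ℝ) : arccot y < Real.pi := by
  have := Real.neg_pi_div_two_lt_arctan y
  have hpi := Real.pi_pos
  unfold arccot; linarith

lemma hasDerivAt_arccot (y : ℝ) : HasDerivAt arccot (-(1/(1+y^2))) y := by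
  have h := Real.hasDerivAt_arctan y
  have : HasDerivAt (fun y => Real.pi/2 - Real.arctan y) (0 - 1/(1+y^2)) y :=
    (hasDerivAt_const y _).sub h
  have e : arccot = fun y => Real.pi/2 - Real.arctan y := rfl
  rw [e]
  simpa using this

lemma hasDerivAt_cot {θ : ℝ} (h : Real.sin θ ≠ 0) :
    HasDerivAt Real.cot (-(1/(Real.sin θ)^2)) θ := by
  have hd := (Real.hasDerivAt_cos θ).div (Real.hasDerivAt_sin θ) h
  have heq : (Real.cos / Real.sin) = Real.cot := by
    funext x; rw [Pi.div_apply, Real.cot_eq_cos_div_sin]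
  rw [heq] at hd
  refine hd.congr_deriv ?_
  have h2 : Real.sin θ ^ 2 + Real.cos θ ^ 2 = 1 := Real.sin_sq_add_cos_sq θ
  rw [← h2]
  ring

lemma thetaN_pos_lt (v : ℝ → ℝ) (t lam : ℝ) (n : ℕ) (x : ℝ) :
    0 < thetaN v t lam n x ∧ thetaN v t lam n x < 2*Real.pi := by
  have hpi := Real.pi_pos
  cases n with
  | zero =>
      refine ⟨arccot_pos _, ?_⟩
      show arccot (t - v x) < 2*Real.pi
      linarith [arccot_lt_pi (t - v x)]
  | succ n =>
      refine ⟨?_, ?_⟩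
      · show (0:ℝ) < arccot _ + arccot _
        linarith [arccot_pos (lam ^ 2 * ((t - v (2 ^ (n + 1) * x)) ^ 2 + 1) *
          Real.cot (thetaN v t lam n x)), arccot_pos (t - v (2 ^ (n + 1) * x))]
      · show arccot _ + arccot _ < 2*Real.pi
        linarith [arccot_lt_pi (lam ^ 2 * ((t - v (2 ^ (n + 1) * x)) ^ 2 + 1) *
          Real.cot (thetaN v t lam n x)), arccot_lt_pi (t - v (2 ^ (n + 1) * x))]

lemma sin_ne_zero_of_mem {θ : ℝ} (h0 : 0 < θ) (h2 : θ < 2*Real.pi) (hne : θ ≠ Real.pi) :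
    Real.sin θ ≠ 0 := by
  rcases lt_trichotomy θ Real.pi with h | h | h
  · exact ne_of_gt (Real.sin_pos_of_pos_of_lt_pi h0 h)
  · exact absurd h hne
  · have hp : 0 < Real.sin (θ - Real.pi) :=
      Real.sin_pos_of_pos_of_lt_pi (by linarith) (by linarith)
    intro hs
    rw [Real.sin_sub_pi, hs] at hp
    norm_num at hp
set_option maxHeartbeats 1000000 in
lemma key_ineq (c₁ C₁ c' L k a g V' cθ d : ℝ)
    (hc₁ : 0 < c₁) (hcC : c₁ ≤ C₁)
    (hc' : c' = c₁ / (2*(1+(2+C₁)^2)))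
    (hg1 : 1 ≤ g) (hgG : g ≤ 1+(2+C₁)^2)
    (ha : |a| ≤ 2+C₁) (hV1 : c₁ ≤ V') (hV2 : V' ≤ C₁)
    (hk : 0 < k) (hd : c'*k/2 ≤ d)
    (hL : 16*(2+C₁)^2*C₁^2 ≤ L*c'^2) (hL0 : 1 ≤ L) :
    3/2*(c'*k) ≤ L*(2*a*(V'*k)*cθ + g*((1+cθ^2)*d))/(1+L^2*g^2*cθ^2) + V'*k/g := by
  have hC₁ : 0 < C₁ := lt_of_lt_of_le hc₁ hcC
  have hB : (0:ℝ) < 2 + C₁ := by linarith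
  have hG : (1:ℝ) ≤ 1 + (2+C₁)^2 := by nlinarith
  have hG0 : (0:ℝ) < 1 + (2+C₁)^2 := by linarith
  have hc'0 : 0 < c' := by rw [hc']; positivity
  have hg0 : (0:ℝ) < g := by linarith
  have hL0' : (0:ℝ) < L := by linarith
  have hV'0 : (0:ℝ) < V' := lt_of_lt_of_le hc₁ hV1
  have hd0 : (0:ℝ) ≤ d := le_trans (by positivity) hd
  have hD : (0:ℝ) < 1 + L^2*g^2*cθ^2 := by positivity
  have hcθ : (0:ℝ) ≤ |cθ| := abs_nonneg cθ
  have hm0 : 0 ≤ L * |cθ| := by positivity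
  have hck : (0:ℝ) ≤ c'*k := mul_nonneg hc'0.le hk.le
  -- second term bound
  have hsecond : 2*(c'*k) ≤ V'*k/g := by
    rw [le_div_iff₀ hg0]
    have hc'' : c' * (2*(1+(2+C₁)^2)) = c₁ := by
      rw [hc']; field_simp
    nlinarith [mul_le_mul_of_nonneg_left hgG (le_of_lt (mul_pos hc'0 hk))]
  -- lower bound on cross term
  have h3 : -((2+C₁)*|cθ|) ≤ a*cθ := by
    nlinarith [neg_abs_le (a*cθ), abs_mul a cθ, mul_le_mul_of_nonneg_right ha (abs_nonneg cθ)]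
  have hT2 : -(2*(2+C₁)*C₁*k*(L*|cθ|)) ≤ L*(2*a*(V'*k)*cθ) := by
    have h4 : L*(2*a*(V'*k)*cθ) = (2*V'*k*L)*(a*cθ) := by ring
    have h5 : (2*V'*k*L)*(-((2+C₁)*|cθ|)) ≤ (2*V'*k*L)*(a*cθ) :=
      mul_le_mul_of_nonneg_left h3 (by positivity)
    have h6 : -(2*(2+C₁)*C₁*k*(L*|cθ|)) ≤ (2*V'*k*L)*(-((2+C₁)*|cθ|)) := by
      nlinarith [mul_nonneg (mul_nonneg (mul_nonneg (mul_nonneg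
        (by norm_num : (0:ℝ) ≤ 2) hB.le) hk.le) hL0'.le) (abs_nonneg cθ),
        mul_le_mul_of_nonneg_right hV2
          (by positivity : (0:ℝ) ≤ 2*(2+C₁)*k*L*|cθ|)]
    linarith [h4 ▸ h5]
  have hT1 : L*(c'*k/2) ≤ L*(g*((1+cθ^2)*d)) := by
    have hgc : (0:ℝ) ≤ g*(1+cθ^2) - 1 := by nlinarith [sq_nonneg cθ]
    have h1 : c'*k/2 ≤ g*((1+cθ^2)*d) := by nlinarith [mul_nonneg hd0 hgc]
    nlinarith
  have hT1' : (0:ℝ) ≤ L*(g*((1+cθ^2)*d)) := by positivity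
  have hN : L*(2*a*(V'*k)*cθ + g*((1+cθ^2)*d))
      = L*(2*a*(V'*k)*cθ) + L*(g*((1+cθ^2)*d)) := by ring
  have hfirst : -(c'*k/2) ≤ L*(2*a*(V'*k)*cθ + g*((1+cθ^2)*d))/(1+L^2*g^2*cθ^2) := by
    rw [le_div_iff₀ hD, hN]
    have hDlow : -(c'*k/2) * (1 + L^2*g^2*cθ^2) ≤ -(c'*k/2) * 1 := by
      nlinarith [mul_nonneg (mul_nonneg hc'0.le hk.le) (by positivity : (0:ℝ) ≤ L^2*g^2*cθ^2)]
    rcases le_or_gt (4*(2+C₁)*C₁*(L*|cθ|)) c' with hcase | hcase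
    · -- small cot
      have h2 : 2*(2+C₁)*C₁*k*(L*|cθ|) ≤ c'*k/2 :=  by
        nlinarith [mul_le_mul_of_nonneg_left hcase (by positivity : (0:ℝ) ≤ k/2)]
      linarith
    · rcases le_or_gt (4*(2+C₁)*C₁) (c' * (L*|cθ|)) with hcase2 | hcase2
      · -- big cot
        have hmsq : (L*|cθ|)^2 ≤ L^2*g^2*cθ^2 := by
          have e : (L*|cθ|)^2 = L^2*cθ^2 := by rw [mul_pow, sq_abs]
          have hg2 : (1:ℝ) ≤ g^2 := by nlinarith
          rw [e]
          nlinarith [mul_nonneg (mul_nonneg (sq_nonneg L) (sq_nonneg cθ)) (sub_nonneg.mpr hg2)]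
        have h3' : 2*(2+C₁)*C₁*k*(L*|cθ|) ≤ c'*k/2 * (L*|cθ|)^2 := by
          nlinarith [mul_le_mul_of_nonneg_right hcase2
            (by positivity : (0:ℝ) ≤ k/2*(L*|cθ|))]
        have h4' : c'*k/2 * (L*|cθ|)^2 ≤ c'*k/2*(L^2*g^2*cθ^2) :=
          mul_le_mul_of_nonneg_left hmsq (by positivity)
        linarith [hck]
      · -- middle : N ≥ 0
        have h5 : c' * (L*|cθ|) * (4*(2+C₁)*C₁) ≤ 16*(2+C₁)^2*C₁^2 := by
          nlinarith [mul_le_mul_of_nonneg_right hcase2.le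
            (by positivity : (0:ℝ) ≤ 4*(2+C₁)*C₁), sq_nonneg (2+C₁), sq_nonneg C₁]
        have h6 : c' * (L*|cθ|) * (4*(2+C₁)*C₁) ≤ L*c'^2 := le_trans h5 hL
        have h4 : 4*(2+C₁)*C₁*(L*|cθ|) ≤ L * c' := by
          have := (mul_le_mul_iff_of_pos_right hc'0).mp
            (by linarith [h6] : (4*(2+C₁)*C₁*(L*|cθ|))*c' ≤ (L*c')*c')
          linarith
        have h7 : 2*(2+C₁)*C₁*k*(L*|cθ|) ≤ L*(c'*k/2) := by
          linarith [mul_le_mul_of_nonneg_left h4 (by positivity : (0:ℝ) ≤ k/2)]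
        have hN0 : (0:ℝ) ≤ L*(2*a*(V'*k)*cθ) + L*(g*((1+cθ^2)*d)) := by
          linarith
        linarith [mul_nonneg (by linarith : (0:ℝ) ≤ c'*k/2) hD.le]
  linarith [hfirst, hsecond]
lemma vfacts (v v' : ℝ → ℝ) (hper : Function.Periodic v 1)
    (hderiv : ∀ x ∈ Set.Ioo (0:ℝ) 1, HasDerivAt v (v' x) x)
    (u : ℝ) (hu : ∀ m : ℤ, u ≠ (m:ℝ)) :
    ∃ w, w ∈ Set.Ioo (0:ℝ) 1 ∧ HasDerivAt v (v' w) u ∧ v u = v w := by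
  set w : ℝ := u - (⌊u⌋ : ℝ) with hw
  have h0 : 0 < w := by
    have h1 : (⌊u⌋:ℝ) ≤ u := Int.floor_le u
    have h2 : u ≠ (⌊u⌋:ℝ) := hu ⌊u⌋
    have := lt_of_le_of_ne h1 (Ne.symm h2)
    simp only [hw]; linarith
  have h1 : w < 1 := by
    have := Int.lt_floor_add_one u
    simp only [hw]; linarith
  have hwmem : w ∈ Set.Ioo (0:ℝ) 1 := ⟨h0, h1⟩
  have hvw := hderiv w hwmem
  have hid : ∀ y : ℝ, v (y - (⌊u⌋:ℝ)) = v y := by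
    intro y
    have := hper.sub_int_mul_eq (x := y) ⌊u⌋
    simpa using this
  have hF : HasDerivAt (fun y : ℝ => v (y - (⌊u⌋:ℝ))) (v' w) u := by
    have hinner : HasDerivAt (fun y : ℝ => y - (⌊u⌋:ℝ)) 1 u :=
      (hasDerivAt_id u).sub_const _
    have := hvw.comp u hinner
    simpa [Function.comp_def] using this
  have hfun : (fun y : ℝ => v (y - (⌊u⌋:ℝ))) = v := funext hid
  rw [hfun] at hF
  refine ⟨w, hwmem, hF, ?_⟩
  rw [← hid u]

set_option maxHeartbeats 1600000 in
lemma thetaN_hasDerivAt_good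
    (v v' : ℝ → ℝ) (c₁ C₁ : ℝ)
    (hper : Function.Periodic v 1) (hc₁ : 0 < c₁)
    (hderiv : ∀ x ∈ Set.Ioo (0:ℝ) 1, HasDerivAt v (v' x) x)
    (hlow : ∀ x ∈ Set.Ioo (0:ℝ) 1, c₁ ≤ v' x)
    (hbd : ∀ x ∈ Set.Ioo (0:ℝ) 1, |v x| + |v' x| ≤ C₁)
    (t lam : ℝ) (ht1 : -1 ≤ t) (ht2 : t ≤ 2)
    (hL : 16*(2+C₁)^2*C₁^2 ≤ lam^2*(c₁/(2*(1+(2+C₁)^2)))^2) (hL0 : 1 ≤ lam^2)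
    (n : ℕ) :
    ∀ x : ℝ, (∀ m : ℤ, (2:ℝ)^n * x ≠ (m:ℝ)) →
      (∀ j, j < n → thetaN v t lam j x ≠ Real.pi) →
      ∃ d, HasDerivAt (thetaN v t lam n) d x ∧
        3/2*(c₁/(2*(1+(2+C₁)^2))*2^n) ≤ d := by
  have hhalf : (1/2:ℝ) ∈ Set.Ioo (0:ℝ) 1 := by norm_num
  have hcC : c₁ ≤ C₁ := by
    have h1 := hlow _ hhalf
    have h2 := hbd _ hhalf
    have h3 := abs_nonneg (v (1/2:ℝ))
    have h4 := le_abs_self (v' (1/2:ℝ))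
    linarith
  have hC₁ : 0 < C₁ := lt_of_lt_of_le hc₁ hcC
  have hG0 : (0:ℝ) < 1+(2+C₁)^2 := by positivity
  have hc'0 : (0:ℝ) < c₁/(2*(1+(2+C₁)^2)) := by positivity
  have habs_t : |t| ≤ 2 := abs_le.mpr ⟨by linarith, ht2⟩
  induction n with
  | zero =>
      intro x hx _
      have hx' : ∀ m : ℤ, x ≠ (m:ℝ) := by
        intro m h
        exact hx m (by rw [pow_zero, one_mul]; exact h)
      obtain ⟨w, hwmem, hdv, hvu⟩ := vfacts v v' hper hderiv x hx'
      have hb := hbd w hwmem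
      have hl := hlow w hwmem
      have hva : |v x| ≤ C₁ := by
        rw [hvu]; linarith [abs_nonneg (v' w)]
      have ha : |t - v x| ≤ 2 + C₁ := by
        have := abs_add_le t (-(v x))
        rw [← sub_eq_add_neg, abs_neg] at this
        linarith
      have ha2 : (t - v x)^2 ≤ (2+C₁)^2 := by
        nlinarith [sq_abs (t - v x), abs_nonneg (t - v x)]
      have hcomp := (hasDerivAt_arccot (t - v x)).comp x ((hasDerivAt_const x t).sub hdv)
      refine ⟨_, hcomp, ?_⟩
      have hgpos : (0:ℝ) < 1 + (t - v x)^2 := by positivity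
      have heq : -(1/(1+(t - v x)^2)) * (0 - v' w) = v' w/(1+(t - v x)^2) := by
        field_simp
        ring
      rw [heq, le_div_iff₀ hgpos]
      have hcc : (c₁/(2*(1+(2+C₁)^2)))*(2*(1+(2+C₁)^2)) = c₁ := by field_simp
      nlinarith [mul_le_mul_of_nonneg_left ha2 hc'0.le]
  | succ n ih =>
      intro x hx hθj
      have hxn : ∀ m : ℤ, (2:ℝ)^n * x ≠ (m:ℝ) := by
        intro m h
        refine hx (2*m) ?_
        have he : (2:ℝ)^(n+1)*x = 2*((2:ℝ)^n*x) := by ring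
        rw [he, h]; push_cast; ring
      obtain ⟨d, hθ, hdb⟩ := ih x hxn (fun j hj => hθj j (Nat.lt_succ_of_lt hj))
      have hθne : thetaN v t lam n x ≠ Real.pi := hθj n (Nat.lt_succ_self n)
      obtain ⟨hpos, hlt⟩ := thetaN_pos_lt v t lam n x
      have hsin : Real.sin (thetaN v t lam n x) ≠ 0 := sin_ne_zero_of_mem hpos hlt hθne
      obtain ⟨w, hwmem, hdvu, hvu⟩ := vfacts v v' hper hderiv ((2:ℝ)^(n+1)*x) hx
      have hb := hbd w hwmem
      have hl := hlow w hwmem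
      have hva : |v ((2:ℝ)^(n+1)*x)| ≤ C₁ := by
        rw [hvu]; linarith [abs_nonneg (v' w)]
      have ha : |t - v ((2:ℝ)^(n+1)*x)| ≤ 2 + C₁ := by
        have := abs_add_le t (-(v ((2:ℝ)^(n+1)*x)))
        rw [← sub_eq_add_neg, abs_neg] at this
        linarith
      have ha2 : (t - v ((2:ℝ)^(n+1)*x))^2 ≤ (2+C₁)^2 := by
        nlinarith [sq_abs (t - v ((2:ℝ)^(n+1)*x)), abs_nonneg (t - v ((2:ℝ)^(n+1)*x))]
      have hV : HasDerivAt (fun y : ℝ => v ((2:ℝ)^(n+1)*y)) (v' w * 2^(n+1)) x := by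
        have hlin : HasDerivAt (fun y : ℝ => (2:ℝ)^(n+1)*y) ((2:ℝ)^(n+1)) x := by
          simpa using (hasDerivAt_id x).const_mul ((2:ℝ)^(n+1))
        exact hdvu.comp x hlin
      have h_tv : HasDerivAt (fun y : ℝ => t - v ((2:ℝ)^(n+1)*y)) (0 - v' w * 2^(n+1)) x :=
        (hasDerivAt_const x t).sub hV
      have h_g : HasDerivAt (fun y : ℝ => (t - v ((2:ℝ)^(n+1)*y))^2 + 1)
          ((2:ℕ) * (t - v ((2:ℝ)^(n+1)*x))^(2-1) * (0 - v' w * 2^(n+1))) x :=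
        (h_tv.pow 2).add_const 1
      have h_lg := h_g.const_mul (lam^2)
      have hcotθ : HasDerivAt (fun y => Real.cot (thetaN v t lam n y))
          (-(1/(Real.sin (thetaN v t lam n x))^2) * d) x :=
        (hasDerivAt_cot hsin).comp x hθ
      have h_in := h_lg.mul hcotθ
      have h_arc1 := (hasDerivAt_arccot
        (lam^2 * ((t - v ((2:ℝ)^(n+1)*x))^2 + 1) * Real.cot (thetaN v t lam n x))).comp x h_in
      have h_arc2 := (hasDerivAt_arccot (t - v ((2:ℝ)^(n+1)*x))).comp x h_tv
      have h_sum := h_arc1.add h_arc2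
      have hsin2 : (1:ℝ)/(Real.sin (thetaN v t lam n x))^2
          = 1 + (Real.cot (thetaN v t lam n x))^2 := by
        rw [Real.cot_eq_cos_div_sin]
        field_simp
        exact (Real.sin_sq_add_cos_sq _).symm
      refine ⟨_, h_sum, ?_⟩
      have hk2 : (0:ℝ) < 2^(n+1) := by positivity
      have hd2 : (c₁/(2*(1+(2+C₁)^2)))*2^(n+1)/2 ≤ d := by
        have he : (2:ℝ)^(n+1) = 2*2^n := by ring
        rw [he]
        have := mul_nonneg hc'0.le (le_of_lt (pow_pos (by norm_num : (0:ℝ)<2) n))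
        linarith
      have hbound := key_ineq c₁ C₁ (c₁/(2*(1+(2+C₁)^2))) (lam^2) (2^(n+1))
          (t - v ((2:ℝ)^(n+1)*x)) ((t - v ((2:ℝ)^(n+1)*x))^2+1) (v' w)
          (Real.cot (thetaN v t lam n x)) d
          hc₁ hcC rfl (by nlinarith [sq_nonneg (t - v ((2:ℝ)^(n+1)*x))])
          (by linarith [ha2]) ha hl
          (by linarith [le_abs_self (v' w), abs_nonneg (v w)]) hk2 hd2 hL hL0
      refine le_trans hbound (le_of_eq ?_)
      rw [hsin2]
      have hP : (0:ℝ) < 1 + (lam^2*((t - v ((2:ℝ)^(n+1)*x))^2+1)*Real.cot (thetaN v t lam n x))^2 := by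
        positivity
      have hgp : (0:ℝ) < (t - v ((2:ℝ)^(n+1)*x))^2+1 := by positivity
      have hDp : (0:ℝ) < 1+(lam^2)^2*((t - v ((2:ℝ)^(n+1)*x))^2+1)^2*(Real.cot (thetaN v t lam n x))^2 := by
        positivity
      push_cast
      field_simp
      ring

lemma dyadic_free (n : ℕ) (x : ℝ) :
    ∃ δ > 0, ∀ y ∈ Set.Ioo x (x+δ), ∀ m : ℤ, (2:ℝ)^n * y ≠ (m:ℝ) := by
  set u : ℝ := (2:ℝ)^n * x with hu
  have hpow : (0:ℝ) < 2^n := by positivity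
  refine ⟨((⌊u⌋:ℝ) + 1 - u)/2^n,
    div_pos (by linarith [Int.lt_floor_add_one u]) hpow, ?_⟩
  intro y hy m heq
  have h1 : u < (2:ℝ)^n * y := by
    have := hy.1
    rw [hu]; nlinarith
  have h2 : (2:ℝ)^n * y < (⌊u⌋:ℝ) + 1 := by
    have h3 := hy.2
    have h4 : (2:ℝ)^n * y < 2^n * (x + ((⌊u⌋:ℝ) + 1 - u)/2^n) := by nlinarith
    have h5 : (2:ℝ)^n * (x + ((⌊u⌋:ℝ) + 1 - u)/2^n) = (⌊u⌋:ℝ) + 1 := by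
      field_simp
      rw [hu]; ring
    linarith [h4.trans_eq h5]
  rw [heq] at h1 h2
  have h6 : (⌊u⌋:ℝ) ≤ u := Int.floor_le u
  have h7 : (⌊u⌋:ℝ) < (m:ℝ) := lt_of_le_of_lt h6 h1
  have h8 : ⌊u⌋ < m := by exact_mod_cast h7
  have h9 : m < ⌊u⌋ + 1 := by exact_mod_cast h2
  omega

set_option maxHeartbeats 800000 in
lemma good_right
    (v v' : ℝ → ℝ) (c₁ C₁ : ℝ)
    (hper : Function.Periodic v 1) (hc₁ : 0 < c₁)
    (hderiv : ∀ x ∈ Set.Ioo (0:ℝ) 1, HasDerivAt v (v' x) x)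
    (hlow : ∀ x ∈ Set.Ioo (0:ℝ) 1, c₁ ≤ v' x)
    (hbd : ∀ x ∈ Set.Ioo (0:ℝ) 1, |v x| + |v' x| ≤ C₁)
    (t lam : ℝ) (ht1 : -1 ≤ t) (ht2 : t ≤ 2)
    (hL : 16*(2+C₁)^2*C₁^2 ≤ lam^2*(c₁/(2*(1+(2+C₁)^2)))^2) (hL0 : 1 ≤ lam^2)
    (n : ℕ) (x : ℝ) :
    ∃ δ > 0, ∀ y ∈ Set.Ioo x (x+δ),
      (∀ m : ℤ, (2:ℝ)^n * y ≠ (m:ℝ)) ∧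
      (∀ j, j < n → thetaN v t lam j y ≠ Real.pi) := by
  have hc'0 : (0:ℝ) < c₁/(2*(1+(2+C₁)^2)) := by positivity
  induction n generalizing x with
  | zero =>
      obtain ⟨δ, hδ, hfree⟩ := dyadic_free 0 x
      exact ⟨δ, hδ, fun y hy => ⟨hfree y hy, fun j hj => absurd hj (Nat.not_lt_zero j)⟩⟩
  | succ n ih =>
      obtain ⟨δ₁, hδ₁, hgood⟩ := ih x
      obtain ⟨δ₂, hδ₂, hdy⟩ := dyadic_free (n+1) x
      set δ₃ := min δ₁ δ₂ with hδ₃def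
      have hδ₃ : 0 < δ₃ := lt_min hδ₁ hδ₂
      have hsub1 : Set.Ioo x (x+δ₃) ⊆ Set.Ioo x (x+δ₁) := by
        apply Set.Ioo_subset_Ioo le_rfl
        simp [hδ₃def, min_le_left]
      have hsub2 : Set.Ioo x (x+δ₃) ⊆ Set.Ioo x (x+δ₂) := by
        apply Set.Ioo_subset_Ioo le_rfl
        simp [hδ₃def, min_le_right]
      have hkey : ∀ y ∈ Set.Ioo x (x+δ₃),
          HasDerivAt (thetaN v t lam n) (deriv (thetaN v t lam n) y) y ∧
          0 < deriv (thetaN v t lam n) y := by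
        intro y hy
        obtain ⟨d, hd, hdb⟩ := thetaN_hasDerivAt_good v v' c₁ C₁ hper hc₁ hderiv hlow hbd
          t lam ht1 ht2 hL hL0 n y (hgood y (hsub1 hy)).1 (fun j hj => (hgood y (hsub1 hy)).2 j hj)
        have hdpos : 0 < d := by
          have := pow_pos (by norm_num : (0:ℝ) < 2) n
          nlinarith
        rw [← hd.deriv] at *
        exact ⟨hd, hdpos⟩
      have hmono : StrictMonoOn (thetaN v t lam n) (Set.Ioo x (x+δ₃)) := by
        apply strictMonoOn_of_deriv_pos (convex_Ioo _ _)
        · exact fun y hy => ((hkey y hy).1.differentiableAt.continuousAt).continuousWithinAt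
        · intro y hy
          rw [interior_Ioo] at hy
          exact (hkey y hy).2
      by_cases hex : ∃ y ∈ Set.Ioo x (x+δ₃), thetaN v t lam n y = Real.pi
      · obtain ⟨y₀, hy₀, hy₀π⟩ := hex
        refine ⟨y₀ - x, by linarith [hy₀.1], ?_⟩
        intro y hy
        have hyI : y ∈ Set.Ioo x (x+δ₃) := ⟨hy.1, by linarith [hy.2, hy₀.2]⟩
        have hyy₀ : y < y₀ := by linarith [hy.2]
        refine ⟨fun m => (hdy y (hsub2 hyI)) m, ?_⟩
        intro j hj
        rcases Nat.lt_succ_iff_lt_or_eq.mp hj with hj' | hj'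
        · exact (hgood y (hsub1 hyI)).2 j hj'
        · subst hj'
          have := hmono hyI hy₀ hyy₀
          rw [hy₀π] at this
          exact ne_of_lt this
      · refine ⟨δ₃, hδ₃, ?_⟩
        intro y hy
        refine ⟨fun m => (hdy y (hsub2 hy)) m, ?_⟩
        intro j hj
        rcases Nat.lt_succ_iff_lt_or_eq.mp hj with hj' | hj'
        · exact (hgood y (hsub1 hy)).2 j hj'
        · subst hj'
          exact fun h => hex ⟨y, hy, h⟩


set_option maxHeartbeats 800000

/-- There are `c > 0` and `λ₀ > 0` depending only on `v` such that
for all `λ ≥ λ₀`, `t ∈ [−1,2]` and `n ≥ 0`, at every point where `θₙ` is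
differentiable its derivative exceeds `c · 2ⁿ`. -/
theorem deriv_thetaN_lower_bound
    (v v' : ℝ → ℝ) (c₁ C₁ : ℝ)
    (hper : Function.Periodic v 1) (hc₁ : 0 < c₁)
    (hderiv : ∀ x ∈ Set.Ioo (0:ℝ) 1, HasDerivAt v (v' x) x)
    (hv'cont : ContinuousOn v' (Set.Ioo 0 1))
    (hlow : ∀ x ∈ Set.Ioo (0:ℝ) 1, c₁ ≤ v' x)
    (hbd : ∀ x ∈ Set.Ioo (0:ℝ) 1, |v x| + |v' x| ≤ C₁)
    (hv0 : Filter.Tendsto v (nhdsWithin 0 (Set.Ioi 0)) (nhds 0))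
    (hv1 : Filter.Tendsto v (nhdsWithin 1 (Set.Iio 1)) (nhds 1)) :
    ∃ c > (0:ℝ), ∃ lam₀ > (0:ℝ), ∀ lam ≥ lam₀, ∀ t ∈ Set.Icc (-1:ℝ) 2, ∀ n : ℕ, ∀ x : ℝ,
      DifferentiableAt ℝ (thetaN v t lam n) x →
        deriv (thetaN v t lam n) x > c * 2 ^ n := by
  have hhalf : (1/2:ℝ) ∈ Set.Ioo (0:ℝ) 1 := by norm_num
  have hcC : c₁ ≤ C₁ := by
    have h1 := hlow _ hhalf
    have h2 := hbd _ hhalf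
    have h3 := abs_nonneg (v (1/2:ℝ))
    have h4 := le_abs_self (v' (1/2:ℝ))
    linarith
  have hC₁ : 0 < C₁ := lt_of_lt_of_le hc₁ hcC
  have hG0 : (0:ℝ) < 1+(2+C₁)^2 := by positivity
  set c' : ℝ := c₁/(2*(1+(2+C₁)^2)) with hc'def
  have hc'0 : (0:ℝ) < c' := by rw [hc'def]; positivity
  refine ⟨c', hc'0, 1 + 4*(2+C₁)*C₁/c', by positivity, ?_⟩
  intro lam hlam t ht n x hdiff
  have hlam1 : (1:ℝ) ≤ lam := by
    have : (0:ℝ) < 4*(2+C₁)*C₁/c' := by positivity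
    linarith
  have hlamc : 4*(2+C₁)*C₁ ≤ lam * c' := by
    have h1 : (1 + 4*(2+C₁)*C₁/c') * c' ≤ lam * c' :=
      mul_le_mul_of_nonneg_right hlam hc'0.le
    have h2 : (1 + 4*(2+C₁)*C₁/c') * c' = c' + 4*(2+C₁)*C₁ := by
      field_simp
    linarith
  have hL : 16*(2+C₁)^2*C₁^2 ≤ lam^2*c'^2 := by
    nlinarith [mul_pos (mul_pos (by linarith : (0:ℝ) < 4*(2+C₁)) hC₁) hc'0]
  have hL0 : (1:ℝ) ≤ lam^2 := by nlinarith
  obtain ⟨δ, hδ, hgood⟩ := good_right v v' c₁ C₁ hper hc₁ hderiv hlow hbd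
    t lam ht.1 ht.2 hL hL0 n x
  have hkey : ∀ y ∈ Set.Ioo x (x+δ),
      HasDerivAt (thetaN v t lam n) (deriv (thetaN v t lam n) y) y ∧
      3/2*(c'*2^n) ≤ deriv (thetaN v t lam n) y := by
    intro y hy
    obtain ⟨d, hd, hdb⟩ := thetaN_hasDerivAt_good v v' c₁ C₁ hper hc₁ hderiv hlow hbd
      t lam ht.1 ht.2 hL hL0 n y (hgood y hy).1 (fun j hj => (hgood y hy).2 j hj)
    rw [← hd.deriv] at *
    exact ⟨hd, hdb⟩
  have htend : Filter.Tendsto (slope (thetaN v t lam n) x) (nhdsWithin x (Set.Ioi x))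
      (nhds (deriv (thetaN v t lam n) x)) := by
    have h1 := hasDerivAt_iff_tendsto_slope.mp hdiff.hasDerivAt
    exact h1.mono_left (nhdsWithin_mono x (fun y hy => ne_of_gt hy))
  have hbound : ∀ᶠ y in nhdsWithin x (Set.Ioi x),
      3/2*(c'*2^n) ≤ slope (thetaN v t lam n) x y := by
    filter_upwards [Ioo_mem_nhdsGT_of_mem (show x ∈ Set.Ico x (x+δ) from ⟨le_refl x, by linarith⟩)] with y hy
    have hxy : x < y := hy.1
    have hcont : ContinuousOn (thetaN v t lam n) (Set.Icc x y) := by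
      intro z hz
      rcases eq_or_lt_of_le hz.1 with h | h
      · rw [← h]; exact hdiff.continuousAt.continuousWithinAt
      · exact ((hkey z ⟨h, lt_of_le_of_lt hz.2 hy.2⟩).1.differentiableAt.continuousAt).continuousWithinAt
    have hdIoo : ∀ z ∈ Set.Ioo x y, HasDerivAt (thetaN v t lam n)
        (deriv (thetaN v t lam n) z) z :=
      fun z hz => (hkey z ⟨hz.1, lt_trans hz.2 hy.2⟩).1
    obtain ⟨ξ, hξ, hslope⟩ := exists_hasDerivAt_eq_slope (thetaN v t lam n)
      (deriv (thetaN v t lam n)) hxy hcont hdIoo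
    have hb := (hkey ξ ⟨hξ.1, lt_trans hξ.2 hy.2⟩).2
    rw [slope_def_field]
    rw [hslope] at hb
    exact hb
  have hge := ge_of_tendsto htend hbound
  have hp2 : (0:ℝ) < 2^n := by positivity
  have : c' * 2^n < 3/2*(c'*2^n) := by nlinarith
  calc c' * 2^n < 3/2*(c'*2^n) := this
    _ ≤ _ := hge
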